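/- Under the hypotheses of the discrete energy dissipation law (g ≥ 0, ε > 0, maximum time step satisfying τ^α ≤ 3/(Γ(2−α)(4g² + 3ε)), and u⁰, …, u^N ∈ V_h solving the variable-step L1 scheme), the discrete energy is bounded by the initial energy: E[u^n] ≤ E[u⁰] for all 1 ≤ n ≤ N. -/

import Mathlib

open scoped BigOperators

/-- ω_β(t) = t^{β-1}/Γ(β) -/
noncomputable def omegaK (β t : ℝ) : ℝ := t ^ (β - 1) / Real.Gamma β

/-- variable-step L1 kernel: `aK α t n k = a^{(n)}_{n-k}` for `1 ≤ k ≤ n`. -/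
noncomputable def aK (α : ℝ) (t : ℕ → ℝ) (n k : ℕ) : ℝ :=
  (1 / (t k - t (k - 1))) * ∫ s in (t (k - 1))..(t k), omegaK (1 - α) (t n - s)

/-- DCC kernel: `pK α t n m = p^{(n)}_m`, i.e. `p^{(n)}_{n-k} = pK α t n (n-k)`;
`p^{(n)}_0 = 1/a^{(n)}_0` and
`p^{(n)}_{n-k} = (1/a^{(k)}_0) Σ_{j=k+1}^n (a^{(j)}_{j-k-1} - a^{(j)}_{j-k}) p^{(n)}_{n-j}`. -/
noncomputable def pK (α : ℝ) (t : ℕ → ℝ) (n : ℕ) : ℕ → ℝ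
  | 0 => 1 / aK α t n n
  | m + 1 =>
      (1 / aK α t (n - m - 1) (n - m - 1)) *
        ∑ i ∈ (Finset.range (m + 1)).attach,
          (aK α t (n - i.1) (n - m) - aK α t (n - i.1) (n - m - 1)) * pK α t n i.1
  decreasing_by exact Finset.mem_range.mp i.2

/-- discrete Laplacian on `L`-periodic grid functions (indices mod `M`) -/
noncomputable def dLap (M : ℕ) (h : ℝ) (v : ZMod M → ZMod M → ℝ) : ZMod M → ZMod M → ℝ :=
  fun i j => (v (i + 1) j + v (i - 1) j + v i (j + 1) + v i (j - 1) - 4 * v i j) / h ^ 2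

/-- discrete inner product ⟨v,w⟩ = h² Σ_{ij} v_{ij} w_{ij} -/
noncomputable def dInner (M : ℕ) [NeZero M] (h : ℝ) (v w : ZMod M → ZMod M → ℝ) : ℝ :=
  h ^ 2 * ∑ i : ZMod M, ∑ j : ZMod M, v i j * w i j

/-- discrete L² norm -/
noncomputable def dNorm (M : ℕ) [NeZero M] (h : ℝ) (v : ZMod M → ZMod M → ℝ) : ℝ :=
  Real.sqrt (dInner M h v v)

/-- the operator (1+Δ_h) -/
noncomputable def opA (M : ℕ) (h : ℝ) (v : ZMod M → ZMod M → ℝ) : ZMod M → ZMod M → ℝ :=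
  v + dLap M h v

/-- pointwise nonlinearity f(u) = u³ - g u² - ε u -/
noncomputable def fPt (g ε : ℝ) (M : ℕ) (v : ZMod M → ZMod M → ℝ) : ZMod M → ZMod M → ℝ :=
  fun i j => (v i j) ^ 3 - g * (v i j) ^ 2 - ε * v i j

/-- discrete energy E[v] = ½‖(1+Δ_h)v‖² + ¼‖v‖₄⁴ - (g/3)⟨v²,v⟩ - (ε/2)‖v‖² -/
noncomputable def dEnergy (M : ℕ) [NeZero M] (h g ε : ℝ) (v : ZMod M → ZMod M → ℝ) : ℝ :=
  (1 / 2) * dInner M h (opA M h v) (opA M h v)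
    + (1 / 4) * (h ^ 2 * ∑ i : ZMod M, ∑ j : ZMod M, |v i j| ^ 4)
    - (g / 3) * dInner M h (fun i j => (v i j) ^ 2) v
    - (ε / 2) * dInner M h v v

/-- chemical potential μ = (1+Δ_h)² v + f(v) -/
noncomputable def muSH (M : ℕ) (h g ε : ℝ) (v : ZMod M → ZMod M → ℝ) : ZMod M → ZMod M → ℝ :=
  opA M h (opA M h v) + fPt g ε M v

namespace SHEnergyAux
open MeasureTheory Set


noncomputable def qk (t : ℕ → ℝ) (θ : ℝ) (k : ℕ) : ℝ :=
  (Real.exp (θ * t k) - Real.exp (θ * t (k-1))) / (θ * (t k - t (k-1)))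

noncomputable def kerF (α : ℝ) (t : ℕ → ℝ) (m k : ℕ) (θ : ℝ) : ℝ :=
  θ ^ (α - 1) * Real.exp (-(θ * t m)) * qk t θ k

lemma abel_aux (c w : ℕ → ℝ) (hw0 : w 0 = 0) :
    ∀ n, (∀ m, 1 ≤ m → m + 1 ≤ n → c (m+1) ≤ c m) →
      c n * w n ^ 2 ≤ ∑ m ∈ Finset.Icc 1 n, c m * (w m ^ 2 - w (m-1) ^ 2) := by
  intro n
  induction n with
  | zero => intro _; simp [hw0]
  | succ n ih =>
    intro hdec
    rw [Finset.sum_Icc_succ_top (by omega)]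
    rcases Nat.eq_zero_or_pos n with rfl | hn
    · simp [hw0]
    · have h1 : c (n+1) ≤ c n := hdec n hn le_rfl
      have h2 := ih (fun m hm hm' => hdec m hm (by omega))
      have h3 : (n+1) - 1 = n := by omega
      rw [h3]
      nlinarith [sq_nonneg (w n)]

lemma qk_bounds (t : ℕ → ℝ) (θ : ℝ) (hθ : 0 < θ) (k : ℕ) (hk : 1 ≤ k)
    (hlt : t (k-1) < t k) :
    Real.exp (θ * t (k-1)) ≤ qk t θ k ∧ qk t θ k ≤ Real.exp (θ * t k) := by
  set a := t (k-1); set b := t k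
  have hd : 0 < θ * (b - a) := mul_pos hθ (by linarith)
  have h1 := Real.add_one_le_exp (θ * (b - a))
  have h2 := Real.add_one_le_exp (θ * (a - b))
  have ea := Real.exp_pos (θ * a)
  have eb := Real.exp_pos (θ * b)
  have hba : Real.exp (θ * b) = Real.exp (θ * a) * Real.exp (θ * (b - a)) := by
    rw [← Real.exp_add]; ring_nf
  have hab : Real.exp (θ * a) = Real.exp (θ * b) * Real.exp (θ * (a - b)) := by
    rw [← Real.exp_add]; ring_nf
  constructor
  · rw [qk, le_div_iff₀ hd]
    nlinarith
  · rw [qk, div_le_iff₀ hd]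
    nlinarith

lemma qk_pos (t : ℕ → ℝ) (θ : ℝ) (hθ : 0 < θ) (k : ℕ) (hk : 1 ≤ k)
    (hlt : t (k-1) < t k) : 0 < qk t θ k :=
  lt_of_lt_of_le (Real.exp_pos _) (qk_bounds t θ hθ k hk hlt).1

lemma perTheta (α : ℝ) (t : ℕ → ℝ) (n : ℕ) (hmono : ∀ k, k < n → t k < t (k+1))
    (x : ℕ → ℝ) (θ : ℝ) (hθ : 0 < θ) :
    (1/2) * ∑ m ∈ Finset.Icc 1 n, kerF α t m m θ * x m ^ 2
      ≤ ∑ m ∈ Finset.Icc 1 n, ∑ k ∈ Finset.Icc 1 m, kerF α t m k θ * (x k * x m) := by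
  rcases Nat.eq_zero_or_pos n with rfl | hn
  · simp
  have hlt : ∀ k, 1 ≤ k → k ≤ n → t (k-1) < t k := by
    intro k hk1 hkn
    have := hmono (k-1) (by omega)
    rwa [Nat.sub_add_cancel hk1] at this
  set P : ℝ := θ ^ (α - 1) with hP
  have hPpos : 0 < P := Real.rpow_pos_of_pos hθ _
  set E : ℕ → ℝ := fun m => Real.exp (-(θ * t m)) with hE
  set Q : ℕ → ℝ := fun k => qk t θ k with hQ
  set w : ℕ → ℝ := fun m => ∑ k ∈ Finset.Icc 1 m, Q k * x k with hw
  set c : ℕ → ℝ := fun m => E m / Q m with hc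
  have hQpos : ∀ k, 1 ≤ k → k ≤ n → 0 < Q k := fun k h1 h2 =>
    qk_pos t θ hθ k h1 (hlt k h1 h2)
  -- rewrite RHS
  have hRHS : ∀ m ∈ Finset.Icc 1 n,
      ∑ k ∈ Finset.Icc 1 m, kerF α t m k θ * (x k * x m)
        = P * (E m * (x m * w m)) := by
    intro m hm
    rw [hw, Finset.mul_sum, Finset.mul_sum, Finset.mul_sum]
    apply Finset.sum_congr rfl
    intro k hk
    simp only [kerF]
    ring
  have hLHS : ∀ m ∈ Finset.Icc 1 n,
      kerF α t m m θ * x m ^ 2 = P * (E m * (Q m * x m ^ 2)) := by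
    intro m hm; simp only [kerF]; ring
  rw [Finset.sum_congr rfl hRHS, Finset.sum_congr rfl hLHS, ← Finset.mul_sum, ← Finset.mul_sum,
    ← mul_assoc, mul_comm (1/2 : ℝ) P, mul_assoc]
  apply mul_le_mul_of_nonneg_left _ hPpos.le
  -- key identity per m
  have hterm : ∀ m ∈ Finset.Icc 1 n,
      E m * (x m * w m) - (1/2) * (E m * (Q m * x m ^ 2))
        = (1/2) * (c m * (w m ^ 2 - w (m-1) ^ 2)) := by
    intro m hm
    simp only [Finset.mem_Icc] at hm
    obtain ⟨m', rfl⟩ : ∃ m', m = m' + 1 := ⟨m - 1, by omega⟩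
    have hrec : w (m'+1) = w m' + Q (m'+1) * x (m'+1) := by
      rw [hw]; exact Finset.sum_Icc_succ_top (by omega) _
    have hq : Q (m'+1) ≠ 0 := (hQpos (m'+1) (by omega) hm.2).ne'
    have h1 : (m'+1) - 1 = m' := by omega
    rw [h1, hc, hrec]
    field_simp
    ring
  have hEq : ∑ m ∈ Finset.Icc 1 n, (E m * (x m * w m) - (1/2) * (E m * (Q m * x m ^ 2)))
      = (1/2) * ∑ m ∈ Finset.Icc 1 n, c m * (w m ^ 2 - w (m-1) ^ 2) := by
    rw [Finset.sum_congr rfl hterm, ← Finset.mul_sum]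
  -- c is decreasing on [1,n]
  have hdec : ∀ m, 1 ≤ m → m + 1 ≤ n → c (m+1) ≤ c m := by
    intro m hm1 hmn
    have hQm := hQpos m hm1 (by omega)
    have hQm1 := hQpos (m+1) (by omega) hmn
    rw [hc, div_le_div_iff₀ hQm1 hQm]
    have hub : Q m ≤ Real.exp (θ * t m) := (qk_bounds t θ hθ m hm1 (hlt m hm1 (by omega))).2
    have hlb : Real.exp (θ * t m) ≤ Q (m+1) := by
      have := (qk_bounds t θ hθ (m+1) (by omega) (hlt (m+1) (by omega) hmn)).1
      simpa using this
    have htm : t m ≤ t (m+1) := (hmono m (by omega)).le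
    have e1 : E (m+1) * Real.exp (θ * t m) ≤ 1 := by
      rw [hE, ← Real.exp_add]
      rw [Real.exp_le_one_iff]
      nlinarith
    have e2 : (1:ℝ) ≤ E m * Real.exp (θ * t m) := by
      rw [hE, ← Real.exp_add]
      simp
    have hEm1 : 0 < E (m+1) := Real.exp_pos _
    have hEm : 0 < E m := Real.exp_pos _
    have expp := Real.exp_pos (θ * t m)
    nlinarith
  have habel := abel_aux c w (by simp [hw]) n hdec
  have hcn : 0 ≤ c n := le_of_lt (div_pos (Real.exp_pos _) (hQpos n hn le_rfl))
  have hfin : 0 ≤ ∑ m ∈ Finset.Icc 1 n, (E m * (x m * w m) - (1/2) * (E m * (Q m * x m ^ 2))) := by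
    rw [hEq]
    nlinarith [sq_nonneg (w n)]
  rw [Finset.sum_sub_distrib, ← Finset.mul_sum] at hfin
  linarith


lemma int_ker {p r : ℝ} (hp : 0 < p) (hr : 0 < r) :
    IntegrableOn (fun θ : ℝ => θ ^ (p-1) * Real.exp (-(r*θ))) (Ioi 0) := by
  have h0 : IntegrableOn (fun x : ℝ => Real.exp (-x) * x ^ (p-1)) (Ioi 0) volume :=
    Real.GammaIntegral_convergent hp
  have h1 : IntegrableOn (fun θ : ℝ => Real.exp (-(r*θ)) * (r*θ) ^ (p-1)) (Ioi 0) volume := by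
    have := (integrableOn_Ioi_comp_mul_left_iff
      (fun x : ℝ => Real.exp (-x) * x ^ (p-1)) 0 hr).2
    simpa using this (by simpa using h0)
  have h2 := h1.const_mul (r ^ (1-p))
  apply IntegrableOn.congr_fun h2 ?_ measurableSet_Ioi
  intro θ hθ
  have hθ0 : (0:ℝ) < θ := hθ
  show r ^ (1-p) * (Real.exp (-(r*θ)) * (r*θ) ^ (p-1)) = θ ^ (p-1) * Real.exp (-(r*θ))
  rw [Real.mul_rpow hr.le hθ0.le]
  rw [show r ^ (1-p) * (Real.exp (-(r*θ)) * (r ^ (p-1) * θ ^ (p-1)))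
      = (r ^ (1-p) * r ^ (p-1)) * (θ ^ (p-1) * Real.exp (-(r*θ))) by ring,
    ← Real.rpow_add hr]
  norm_num

/-- the integrand for the Laplace representation -/
noncomputable def Fk (α T : ℝ) (s θ : ℝ) : ℝ := θ ^ (α-1) * Real.exp (-((T-s)*θ))

lemma rep_main {α a b T : ℝ} (hα1 : 0 < α) (hα2 : α < 1) (hab : a < b) (hbT : b ≤ T) :
    (∫ s in a..b, (T - s) ^ (-α)) * Real.Gamma α
      = (∫ θ in Ioi (0:ℝ), θ ^ (α-1) * Real.exp (-(θ*T)) * ((Real.exp (θ*b) - Real.exp (θ*a)) / θ))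
    ∧ IntegrableOn (fun θ : ℝ =>
        θ ^ (α-1) * Real.exp (-(θ*T)) * ((Real.exp (θ*b) - Real.exp (θ*a)) / θ)) (Ioi 0) := by
  have hmeas : AEStronglyMeasurable (Function.uncurry (Fk α T))
      ((volume.restrict (Ioo a b)).prod (volume.restrict (Ioi (0:ℝ)))) := by
    apply Measurable.aestronglyMeasurable
    have : Function.uncurry (Fk α T)
        = fun p : ℝ × ℝ => p.2 ^ (α-1) * Real.exp (-((T - p.1) * p.2)) := rfl
    rw [this]; fun_prop
  have hsecs : ∀ s ∈ Ioo a b, IntegrableOn (fun θ => Fk α T s θ) (Ioi 0) := by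
    intro s hs
    exact int_ker hα1 (by linarith [hs.2] : (0:ℝ) < T - s)
  have hval : ∀ s ∈ Ioo a b,
      (∫ θ in Ioi (0:ℝ), Fk α T s θ) = Real.Gamma α * (T-s) ^ (-α) := by
    intro s hs
    have hTs : 0 < T - s := by linarith [hs.2]
    have h := Real.integral_rpow_mul_exp_neg_mul_Ioi hα1 hTs
    rw [show (∫ θ in Ioi (0:ℝ), Fk α T s θ)
        = ∫ θ in Ioi (0:ℝ), θ ^ (α-1) * Real.exp (-((T-s)*θ)) from rfl]
    rw [h, one_div, Real.inv_rpow hTs.le, ← Real.rpow_neg hTs.le]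
    ring
  have hbase : IntegrableOn (fun s => (T-s) ^ (-α)) (Ioo a b) volume := by
    have h1 : IntervalIntegrable (fun x : ℝ => x ^ (-α)) volume (T-b) (T-a) :=
      intervalIntegral.intervalIntegrable_rpow' (by linarith)
    have h3 : IntervalIntegrable (fun s => (T-s) ^ (-α)) volume a b := by
      simpa using (h1.comp_sub_left T).symm
    have h4 := (intervalIntegrable_iff' (μ := volume)).1 h3
    exact h4.mono_set (by rw [uIcc_of_le hab.le]; exact Ioo_subset_Icc_self)
  have hnorm_int : Integrable (fun s => ∫ θ, ‖Fk α T s θ‖ ∂(volume.restrict (Ioi (0:ℝ))))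
      (volume.restrict (Ioo a b)) := by
    apply IntegrableOn.congr_fun
      ((hbase.const_mul (Real.Gamma α)) : IntegrableOn _ _ _) ?_ measurableSet_Ioo
    intro s hs
    show Real.Gamma α * (T - s) ^ (-α) = _
    have h5 : (∫ θ, ‖Fk α T s θ‖ ∂(volume.restrict (Ioi (0:ℝ))))
        = ∫ θ in Ioi (0:ℝ), Fk α T s θ := by
      apply setIntegral_congr_fun measurableSet_Ioi
      intro θ hθ
      have hθ0 : (0:ℝ) < θ := hθ
      show ‖Fk α T s θ‖ = Fk α T s θ
      rw [Real.norm_eq_abs, abs_of_nonneg]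
      unfold Fk; positivity
    exact (h5.trans (hval s hs)).symm
  have hprod : Integrable (Function.uncurry (Fk α T))
      ((volume.restrict (Ioo a b)).prod (volume.restrict (Ioi (0:ℝ)))) := by
    refine (integrable_prod_iff hmeas).2 ⟨?_, hnorm_int⟩
    exact (ae_restrict_mem measurableSet_Ioo).mono (fun s hs => hsecs s hs)
  have hswap := integral_integral_swap hprod
  have hinner : ∀ θ ∈ Ioi (0:ℝ),
      (∫ s, Fk α T s θ ∂(volume.restrict (Ioo a b)))
        = θ ^ (α-1) * Real.exp (-(θ*T)) * ((Real.exp (θ*b) - Real.exp (θ*a)) / θ) := by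
    intro θ hθ
    have hθ0 : (0:ℝ) < θ := hθ
    have h1 : (∫ s, Fk α T s θ ∂(volume.restrict (Ioo a b)))
        = ∫ s in Ioo a b, (θ ^ (α-1) * Real.exp (-(θ*T))) * Real.exp (θ*s) := by
      apply setIntegral_congr_fun measurableSet_Ioo
      intro s _
      show θ ^ (α-1) * Real.exp (-((T-s)*θ)) = θ ^ (α-1) * Real.exp (-(θ*T)) * Real.exp (θ*s)
      rw [mul_assoc, ← Real.exp_add]
      have : -(θ*T) + θ*s = -((T-s)*θ) := by ring
      rw [this]
    rw [h1, MeasureTheory.integral_const_mul]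
    have h2 : (∫ s in Ioo a b, Real.exp (θ*s)) = (Real.exp (θ*b) - Real.exp (θ*a)) / θ := by
      rw [← MeasureTheory.integral_Ioc_eq_integral_Ioo,
        ← intervalIntegral.integral_of_le hab.le]
      rw [intervalIntegral.integral_comp_mul_left Real.exp hθ0.ne']
      rw [integral_exp]
      rw [smul_eq_mul]
      field_simp
    rw [h2]
  have hLHSval : (∫ s, (∫ θ, Fk α T s θ ∂(volume.restrict (Ioi (0:ℝ))))
        ∂(volume.restrict (Ioo a b)))
      = (∫ s in a..b, (T - s) ^ (-α)) * Real.Gamma α := by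
    rw [setIntegral_congr_fun measurableSet_Ioo hval, MeasureTheory.integral_const_mul,
      intervalIntegral.integral_of_le hab.le, MeasureTheory.integral_Ioc_eq_integral_Ioo]
    ring
  constructor
  · rw [← hLHSval, hswap]
    exact setIntegral_congr_fun measurableSet_Ioi hinner
  · exact IntegrableOn.congr_fun hprod.integral_prod_right hinner measurableSet_Ioi

lemma omegaK_eq (α r : ℝ) : omegaK (1 - α) r = r ^ (-α) / Real.Gamma (1-α) := by
  unfold omegaK
  norm_num

lemma aK_eq_intervalIntegral (α : ℝ) (t : ℕ → ℝ) (m k : ℕ) :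
    aK α t m k = (1 / (t k - t (k-1))) *
      ((∫ s in (t (k-1))..(t k), (t m - s) ^ (-α)) / Real.Gamma (1-α)) := by
  unfold aK
  rw [show (∫ s in (t (k-1))..(t k), omegaK (1-α) (t m - s))
      = ∫ s in (t (k-1))..(t k), (t m - s) ^ (-α) / Real.Gamma (1-α) by
    apply intervalIntegral.integral_congr; intro s _; exact omegaK_eq α _]
  rw [intervalIntegral.integral_div]

lemma aK_rep (α : ℝ) (hα1 : 0 < α) (hα2 : α < 1) (t : ℕ → ℝ) (m k : ℕ)
    (hab : t (k-1) < t k) (hbT : t k ≤ t m) :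
    aK α t m k = (Real.Gamma (1-α) * Real.Gamma α)⁻¹ * ∫ θ in Ioi (0:ℝ), kerF α t m k θ
    ∧ IntegrableOn (kerF α t m k) (Ioi 0) := by
  obtain ⟨hrep, hint⟩ := rep_main hα1 hα2 hab hbT
  have hτ : (0:ℝ) < t k - t (k-1) := by linarith
  have hfun : kerF α t m k = fun θ =>
      (θ ^ (α-1) * Real.exp (-(θ * t m)) * ((Real.exp (θ * t k) - Real.exp (θ * t (k-1))) / θ))
        / (t k - t (k-1)) := by
    funext θ
    unfold kerF qk
    rw [mul_div_assoc, div_div]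
  constructor
  · rw [aK_eq_intervalIntegral α t m k, hfun, MeasureTheory.integral_div]
    have hΓα : Real.Gamma α ≠ 0 := (Real.Gamma_pos_of_pos hα1).ne'
    have hΓ1α : Real.Gamma (1-α) ≠ 0 := (Real.Gamma_pos_of_pos (by linarith)).ne'
    rw [← hrep]
    field_simp
  · rw [hfun]
    exact hint.div_const _

lemma aK_diag (α : ℝ) (hα1 : 0 < α) (hα2 : α < 1) (t : ℕ → ℝ) (m : ℕ)
    (hab : t (m-1) < t m) :
    aK α t m m = (t m - t (m-1)) ^ (-α) / Real.Gamma (2-α) := by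
  have hτ : (0:ℝ) < t m - t (m-1) := by linarith
  rw [aK_eq_intervalIntegral α t m m]
  have h1 : (∫ s in (t (m-1))..(t m), (t m - s) ^ (-α))
      = (t m - t (m-1)) ^ (1-α) / (1-α) := by
    rw [intervalIntegral.integral_comp_sub_left (fun x => x ^ (-α)) (t m)]
    rw [sub_self]
    rw [integral_rpow (Or.inl (by linarith))]
    rw [Real.zero_rpow (by linarith : -α + 1 ≠ 0)]
    rw [show -α + 1 = 1 - α by ring]
    ring
  rw [h1]
  have hΓ : Real.Gamma (2-α) = (1-α) * Real.Gamma (1-α) := by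
    rw [show (2:ℝ)-α = (1-α) + 1 by ring, Real.Gamma_add_one (by linarith)]
  have hpow : (t m - t (m-1)) ^ (1-α) = (t m - t (m-1)) ^ (-α) * (t m - t (m-1)) := by
    rw [show (1:ℝ)-α = -α + 1 by ring, Real.rpow_add hτ, Real.rpow_one]
  have hΓ1α : Real.Gamma (1-α) ≠ 0 := (Real.Gamma_pos_of_pos (by linarith)).ne'
  rw [hΓ, hpow]
  field_simp

lemma t_mono_le (t : ℕ → ℝ) (n : ℕ) (hmono : ∀ k, k < n → t k < t (k+1)) :
    ∀ m, m ≤ n → ∀ k, k ≤ m → t k ≤ t m := by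
  intro m
  induction m with
  | zero => intro _ k hk; simp_all
  | succ m ih =>
    intro hm k hk
    rcases Nat.lt_or_ge k (m+1) with h | h
    · have h2 : t k ≤ t m := ih (by omega) k (by omega)
      have h3 : t m < t (m+1) := hmono m (by omega)
      linarith
    · have : k = m+1 := by omega
      rw [this]

lemma scalar_psd (α : ℝ) (hα1 : 0 < α) (hα2 : α < 1) (t : ℕ → ℝ) (n : ℕ)
    (hmono : ∀ k, k < n → t k < t (k+1)) (x : ℕ → ℝ) :
    (1/2) * ∑ m ∈ Finset.Icc 1 n, aK α t m m * x m ^ 2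
      ≤ ∑ m ∈ Finset.Icc 1 n, ∑ k ∈ Finset.Icc 1 m, aK α t m k * (x k * x m) := by
  set C : ℝ := (Real.Gamma (1-α) * Real.Gamma α)⁻¹ with hC
  have hCpos : 0 < C := by
    rw [hC]
    have h1 := Real.Gamma_pos_of_pos hα1
    have h2 := Real.Gamma_pos_of_pos (by linarith : (0:ℝ) < 1 - α)
    positivity
  have hcond : ∀ m k, m ∈ Finset.Icc 1 n → k ∈ Finset.Icc 1 m →
      t (k-1) < t k ∧ t k ≤ t m := by
    intro m k hm hk
    simp only [Finset.mem_Icc] at hm hk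
    constructor
    · have := hmono (k-1) (by omega)
      rwa [Nat.sub_add_cancel hk.1] at this
    · exact t_mono_le t n hmono m hm.2 k hk.2
  have hrep : ∀ m k, m ∈ Finset.Icc 1 n → k ∈ Finset.Icc 1 m →
      aK α t m k = C * ∫ θ in Ioi (0:ℝ), kerF α t m k θ :=
    fun m k hm hk => (aK_rep α hα1 hα2 t m k (hcond m k hm hk).1 (hcond m k hm hk).2).1
  have hint : ∀ m k, m ∈ Finset.Icc 1 n → k ∈ Finset.Icc 1 m →
      IntegrableOn (kerF α t m k) (Ioi 0) :=
    fun m k hm hk => (aK_rep α hα1 hα2 t m k (hcond m k hm hk).1 (hcond m k hm hk).2).2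
  -- rewrite both sides
  have hRHS : ∑ m ∈ Finset.Icc 1 n, ∑ k ∈ Finset.Icc 1 m, aK α t m k * (x k * x m)
      = C * ∑ m ∈ Finset.Icc 1 n, ∑ k ∈ Finset.Icc 1 m,
          (∫ θ in Ioi (0:ℝ), kerF α t m k θ) * (x k * x m) := by
    rw [Finset.mul_sum]
    apply Finset.sum_congr rfl
    intro m hm
    rw [Finset.mul_sum]
    apply Finset.sum_congr rfl
    intro k hk
    rw [hrep m k hm hk]; ring
  have hLHS : ∑ m ∈ Finset.Icc 1 n, aK α t m m * x m ^ 2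
      = C * ∑ m ∈ Finset.Icc 1 n, (∫ θ in Ioi (0:ℝ), kerF α t m m θ) * x m ^ 2 := by
    rw [Finset.mul_sum]
    apply Finset.sum_congr rfl
    intro m hm
    rw [hrep m m hm (by simp only [Finset.mem_Icc] at hm ⊢; omega)]; ring
  rw [hRHS, hLHS]
  -- turn sums of integrals into integrals of sums
  have hintA : ∀ m ∈ Finset.Icc 1 n, Integrable
      (fun θ => ∑ k ∈ Finset.Icc 1 m, kerF α t m k θ * (x k * x m))
      (volume.restrict (Ioi (0:ℝ))) := by
    intro m hm
    apply MeasureTheory.integrable_finset_sum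
    intro k hk
    exact (hint m k hm hk).mul_const _
  have hA : (∑ m ∈ Finset.Icc 1 n, ∑ k ∈ Finset.Icc 1 m,
        (∫ θ in Ioi (0:ℝ), kerF α t m k θ) * (x k * x m))
      = ∫ θ in Ioi (0:ℝ), ∑ m ∈ Finset.Icc 1 n, ∑ k ∈ Finset.Icc 1 m,
          kerF α t m k θ * (x k * x m) := by
    rw [MeasureTheory.integral_finset_sum _ hintA]
    apply Finset.sum_congr rfl
    intro m hm
    rw [MeasureTheory.integral_finset_sum _ (fun k hk => (hint m k hm hk).mul_const _)]
    apply Finset.sum_congr rfl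
    intro k hk
    rw [MeasureTheory.integral_mul_const]
  have hB : (∑ m ∈ Finset.Icc 1 n, (∫ θ in Ioi (0:ℝ), kerF α t m m θ) * x m ^ 2)
      = ∫ θ in Ioi (0:ℝ), ∑ m ∈ Finset.Icc 1 n, kerF α t m m θ * x m ^ 2 := by
    rw [MeasureTheory.integral_finset_sum _ (fun m hm =>
      (hint m m hm (by simp only [Finset.mem_Icc] at hm ⊢; omega)).mul_const _)]
    apply Finset.sum_congr rfl
    intro m hm
    rw [MeasureTheory.integral_mul_const]
  rw [hA, hB]
  have hBint : Integrable (fun θ => ∑ m ∈ Finset.Icc 1 n, kerF α t m m θ * x m ^ 2)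
      (volume.restrict (Ioi (0:ℝ))) := by
    apply MeasureTheory.integrable_finset_sum
    intro m hm
    exact (hint m m hm (by simp only [Finset.mem_Icc] at hm ⊢; omega)).mul_const _
  have hAint2 : Integrable (fun θ => ∑ m ∈ Finset.Icc 1 n, ∑ k ∈ Finset.Icc 1 m,
      kerF α t m k θ * (x k * x m)) (volume.restrict (Ioi (0:ℝ))) :=
    MeasureTheory.integrable_finset_sum _ hintA
  have hkey : 0 ≤ ∫ θ in Ioi (0:ℝ),
      ((∑ m ∈ Finset.Icc 1 n, ∑ k ∈ Finset.Icc 1 m, kerF α t m k θ * (x k * x m))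
        - (1/2) * ∑ m ∈ Finset.Icc 1 n, kerF α t m m θ * x m ^ 2) := by
    apply setIntegral_nonneg measurableSet_Ioi
    intro θ hθ
    have := perTheta α t n hmono x θ hθ
    linarith
  rw [MeasureTheory.integral_sub hAint2 (hBint.const_mul _)] at hkey
  rw [MeasureTheory.integral_const_mul] at hkey
  nlinarith


variable {M : ℕ} [NeZero M]

lemma sum2_add (F G : ZMod M → ZMod M → ℝ) :
    (∑ i : ZMod M, ∑ j : ZMod M, F i j) + (∑ i : ZMod M, ∑ j : ZMod M, G i j)
      = ∑ i : ZMod M, ∑ j : ZMod M, (F i j + G i j) := by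
  rw [← Finset.sum_add_distrib]
  exact Finset.sum_congr rfl (fun i _ => by rw [← Finset.sum_add_distrib])

lemma sum2_sub (F G : ZMod M → ZMod M → ℝ) :
    (∑ i : ZMod M, ∑ j : ZMod M, F i j) - (∑ i : ZMod M, ∑ j : ZMod M, G i j)
      = ∑ i : ZMod M, ∑ j : ZMod M, (F i j - G i j) := by
  rw [← Finset.sum_sub_distrib]
  exact Finset.sum_congr rfl (fun i _ => by rw [← Finset.sum_sub_distrib])

lemma sum2_scal (c : ℝ) (F : ZMod M → ZMod M → ℝ) :
    c * (∑ i : ZMod M, ∑ j : ZMod M, F i j) = ∑ i : ZMod M, ∑ j : ZMod M, c * F i j := by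
  rw [Finset.mul_sum]
  exact Finset.sum_congr rfl (fun i _ => by rw [Finset.mul_sum])

lemma sum_shift (F : ZMod M → ℝ) : ∑ i : ZMod M, F (i + 1) = ∑ i : ZMod M, F i :=
  Equiv.sum_comp (Equiv.addRight (1 : ZMod M)) F

lemma sum_shift' (F : ZMod M → ℝ) : ∑ i : ZMod M, F (i - 1) = ∑ i : ZMod M, F i :=
  Equiv.sum_comp (Equiv.subRight (1 : ZMod M)) F

lemma shift_i_plus (v w : ZMod M → ZMod M → ℝ) :
    ∑ i : ZMod M, ∑ j : ZMod M, v (i+1) j * w i j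
      = ∑ i : ZMod M, ∑ j : ZMod M, v i j * w (i-1) j := by
  have := sum_shift (M := M) (fun i => ∑ j : ZMod M, v i j * w (i-1) j)
  simpa using this

lemma shift_i_minus (v w : ZMod M → ZMod M → ℝ) :
    ∑ i : ZMod M, ∑ j : ZMod M, v (i-1) j * w i j
      = ∑ i : ZMod M, ∑ j : ZMod M, v i j * w (i+1) j := by
  have := sum_shift' (M := M) (fun i => ∑ j : ZMod M, v i j * w (i+1) j)
  simpa using this

lemma shift_j_plus (v w : ZMod M → ZMod M → ℝ) :
    ∑ i : ZMod M, ∑ j : ZMod M, v i (j+1) * w i j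
      = ∑ i : ZMod M, ∑ j : ZMod M, v i j * w i (j-1) := by
  apply Finset.sum_congr rfl
  intro i _
  have := sum_shift (M := M) (fun j => v i j * w i (j-1))
  simpa using this

lemma shift_j_minus (v w : ZMod M → ZMod M → ℝ) :
    ∑ i : ZMod M, ∑ j : ZMod M, v i (j-1) * w i j
      = ∑ i : ZMod M, ∑ j : ZMod M, v i j * w i (j+1) := by
  apply Finset.sum_congr rfl
  intro i _
  have := sum_shift' (M := M) (fun j => v i j * w i (j+1))
  simpa using this

lemma sum_dLap_mul (h : ℝ) (v w : ZMod M → ZMod M → ℝ) :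
    ∑ i : ZMod M, ∑ j : ZMod M, dLap M h v i j * w i j
      = ∑ i : ZMod M, ∑ j : ZMod M, v i j * dLap M h w i j := by
  unfold dLap
  have lhs_eq : ∀ i j : ZMod M,
      (v (i+1) j + v (i-1) j + v i (j+1) + v i (j-1) - 4 * v i j) / h^2 * w i j
        = (v (i+1) j * w i j + v (i-1) j * w i j + v i (j+1) * w i j + v i (j-1) * w i j
            - 4 * (v i j * w i j)) / h^2 := by
    intro i j; ring
  have rhs_eq : ∀ i j : ZMod M,
      v i j * ((w (i+1) j + w (i-1) j + w i (j+1) + w i (j-1) - 4 * w i j) / h^2)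
        = (v i j * w (i+1) j + v i j * w (i-1) j + v i j * w i (j+1) + v i j * w i (j-1)
            - 4 * (v i j * w i j)) / h^2 := by
    intro i j; ring
  simp only [lhs_eq, rhs_eq]
  have div_sum : ∀ F : ZMod M → ZMod M → ℝ,
      ∑ i : ZMod M, ∑ j : ZMod M, F i j / h^2
        = (∑ i : ZMod M, ∑ j : ZMod M, F i j) / h^2 := by
    intro F
    rw [Finset.sum_div]
    exact Finset.sum_congr rfl (fun i _ => by rw [Finset.sum_div])
  rw [div_sum, div_sum]
  congr 1
  have e1 := shift_i_plus (M := M) v w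
  have e2 := shift_i_minus (M := M) v w
  have e3 := shift_j_plus (M := M) v w
  have e4 := shift_j_minus (M := M) v w
  have expand : ∀ (a b c d e : ZMod M → ZMod M → ℝ),
      ∑ i : ZMod M, ∑ j : ZMod M,
        (a i j + b i j + c i j + d i j - 4 * e i j)
      = (∑ i : ZMod M, ∑ j : ZMod M, a i j) + (∑ i : ZMod M, ∑ j : ZMod M, b i j)
        + (∑ i : ZMod M, ∑ j : ZMod M, c i j) + (∑ i : ZMod M, ∑ j : ZMod M, d i j)
        - 4 * (∑ i : ZMod M, ∑ j : ZMod M, e i j) := by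
    intro a b c d e
    rw [sum2_scal, sum2_add, sum2_add, sum2_add, sum2_sub]
  rw [expand (fun i j => v (i+1) j * w i j) (fun i j => v (i-1) j * w i j)
      (fun i j => v i (j+1) * w i j) (fun i j => v i (j-1) * w i j) (fun i j => v i j * w i j),
    expand (fun i j => v i j * w (i+1) j) (fun i j => v i j * w (i-1) j)
      (fun i j => v i j * w i (j+1)) (fun i j => v i j * w i (j-1)) (fun i j => v i j * w i j)]
  rw [e1, e2, e3, e4]
  ring

lemma dInner_opA_symm (h : ℝ) (v w : ZMod M → ZMod M → ℝ) :
    dInner M h (opA M h v) w = dInner M h v (opA M h w) := by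
  unfold dInner opA
  congr 1
  simp only [Pi.add_apply]
  have l : ∀ i j : ZMod M, (v i j + dLap M h v i j) * w i j
      = v i j * w i j + dLap M h v i j * w i j := fun i j => by ring
  have r : ∀ i j : ZMod M, v i j * (w i j + dLap M h w i j)
      = v i j * w i j + v i j * dLap M h w i j := fun i j => by ring
  simp only [l, r]
  rw [← sum2_add (fun i j => v i j * w i j) (fun i j => dLap M h v i j * w i j),
    ← sum2_add (fun i j => v i j * w i j) (fun i j => v i j * dLap M h w i j),
    sum_dLap_mul]

lemma opA_sub (h : ℝ) (v w : ZMod M → ZMod M → ℝ) :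
    opA M h (v - w) = opA M h v - opA M h w := by
  funext i j
  simp only [opA, dLap, Pi.add_apply, Pi.sub_apply]
  ring

lemma dInner_add_left (h : ℝ) (v w z : ZMod M → ZMod M → ℝ) :
    dInner M h (v + w) z = dInner M h v z + dInner M h w z := by
  unfold dInner
  rw [← mul_add, sum2_add (fun i j => v i j * z i j) (fun i j => w i j * z i j)]
  congr 1
  exact Finset.sum_congr rfl (fun i _ => Finset.sum_congr rfl (fun j _ => by
    simp only [Pi.add_apply]; ring))

lemma dInner_nonneg (h : ℝ) (v : ZMod M → ZMod M → ℝ) : 0 ≤ dInner M h v v := by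
  unfold dInner
  apply mul_nonneg (by positivity)
  apply Finset.sum_nonneg
  intro i _
  apply Finset.sum_nonneg
  intro j _
  exact mul_self_nonneg _

lemma pt_ineq (g ε x y p q : ℝ) :
    ((1/2)*p^2 + (1/4)*x^4 - (g/3)*x^3 - (ε/2)*x^2)
      - ((1/2)*q^2 + (1/4)*y^4 - (g/3)*y^3 - (ε/2)*y^2)
      ≤ p*(p-q) + (x^3 - g*x^2 - ε*x)*(x-y) + ((4*g^2+3*ε)/6)*(x-y)^2 := by
  have key : p*(p-q) + (x^3 - g*x^2 - ε*x)*(x-y) + ((4*g^2+3*ε)/6)*(x-y)^2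
      - (((1/2)*p^2 + (1/4)*x^4 - (g/3)*x^3 - (ε/2)*x^2)
        - ((1/2)*q^2 + (1/4)*y^4 - (g/3)*y^3 - (ε/2)*y^2))
      = (1/2)*(p-q)^2 + (x-y)^2 * ((1/4)*((x-y) - 2*(x - g/3))^2
          + (1/2)*(x - g/3)^2 + g^2/2) := by ring
  nlinarith [sq_nonneg (p-q), mul_nonneg (sq_nonneg (x-y))
      (by positivity : (0:ℝ) ≤ (1/4)*((x-y) - 2*(x - g/3))^2 + (1/2)*(x - g/3)^2 + g^2/2)]

lemma dEnergy_eq (h g ε : ℝ) (v : ZMod M → ZMod M → ℝ) :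
    dEnergy M h g ε v = h^2 * ∑ i : ZMod M, ∑ j : ZMod M,
      ((1/2) * (opA M h v i j)^2 + (1/4) * (v i j)^4 - (g/3) * (v i j)^3 - (ε/2) * (v i j)^2) := by
  unfold dEnergy dInner
  have habs : (∑ i : ZMod M, ∑ j : ZMod M, |v i j| ^ 4)
      = ∑ i : ZMod M, ∑ j : ZMod M, (v i j)^4 :=
    Finset.sum_congr rfl (fun i _ => Finset.sum_congr rfl (fun j _ => by
      rw [← abs_pow, abs_of_nonneg (by positivity)]))
  rw [habs]
  rw [show h^2 * ∑ i : ZMod M, ∑ j : ZMod M,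
      ((1/2) * (opA M h v i j)^2 + (1/4) * (v i j)^4 - (g/3) * (v i j)^3 - (ε/2) * (v i j)^2)
    = h^2 * (((1/2) * ∑ i : ZMod M, ∑ j : ZMod M, (opA M h v i j)^2)
        + ((1/4) * ∑ i : ZMod M, ∑ j : ZMod M, (v i j)^4)
        - ((g/3) * ∑ i : ZMod M, ∑ j : ZMod M, (v i j)^3)
        - ((ε/2) * ∑ i : ZMod M, ∑ j : ZMod M, (v i j)^2)) by
    rw [sum2_scal ((1:ℝ)/2) (fun i j => (opA M h v i j)^2),
      sum2_scal ((1:ℝ)/4) (fun i j => (v i j)^4),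
      sum2_scal (g/3) (fun i j => (v i j)^3),
      sum2_scal (ε/2) (fun i j => (v i j)^2),
      sum2_add, sum2_sub, sum2_sub]]
  rw [show (∑ i : ZMod M, ∑ j : ZMod M, opA M h v i j * opA M h v i j)
      = ∑ i : ZMod M, ∑ j : ZMod M, (opA M h v i j)^2 from
    Finset.sum_congr rfl (fun i _ => Finset.sum_congr rfl (fun j _ => by ring)),
    show (∑ i : ZMod M, ∑ j : ZMod M, (v i j)^2 * v i j)
      = ∑ i : ZMod M, ∑ j : ZMod M, (v i j)^3 from
    Finset.sum_congr rfl (fun i _ => Finset.sum_congr rfl (fun j _ => by ring)),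
    show (∑ i : ZMod M, ∑ j : ZMod M, v i j * v i j)
      = ∑ i : ZMod M, ∑ j : ZMod M, (v i j)^2 from
    Finset.sum_congr rfl (fun i _ => Finset.sum_congr rfl (fun j _ => by ring))]
  ring

lemma energy_step (h g ε : ℝ) (a b : ZMod M → ZMod M → ℝ) :
    dEnergy M h g ε a - dEnergy M h g ε b
      ≤ dInner M h (muSH M h g ε a) (a - b)
        + ((4*g^2+3*ε)/6) * dInner M h (a - b) (a - b) := by
  have hsplit : dInner M h (muSH M h g ε a) (a - b)
      = dInner M h (opA M h a) (opA M h a - opA M h b)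
        + dInner M h (fPt g ε M a) (a - b) := by
    unfold muSH
    rw [dInner_add_left, dInner_opA_symm, opA_sub]
  rw [hsplit, dEnergy_eq, dEnergy_eq]
  have hR1 : dInner M h (opA M h a) (opA M h a - opA M h b)
      = h^2 * ∑ i : ZMod M, ∑ j : ZMod M,
          opA M h a i j * (opA M h a i j - opA M h b i j) := by
    rfl
  have hR2 : dInner M h (fPt g ε M a) (a - b)
      = h^2 * ∑ i : ZMod M, ∑ j : ZMod M,
          ((a i j)^3 - g*(a i j)^2 - ε*(a i j)) * (a i j - b i j) := by
    rfl
  have hR3 : ((4*g^2+3*ε)/6) * dInner M h (a - b) (a - b)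
      = h^2 * ∑ i : ZMod M, ∑ j : ZMod M,
          ((4*g^2+3*ε)/6) * (a i j - b i j)^2 := by
    unfold dInner
    rw [show ((4*g^2+3*ε)/6) * (h^2 * ∑ i : ZMod M, ∑ j : ZMod M, (a-b) i j * (a-b) i j)
        = h^2 * (((4*g^2+3*ε)/6) * ∑ i : ZMod M, ∑ j : ZMod M, (a-b) i j * (a-b) i j) by ring]
    rw [sum2_scal ((4*g^2+3*ε)/6) (fun i j => (a-b) i j * (a-b) i j)]
    congr 1
    exact Finset.sum_congr rfl (fun i _ => Finset.sum_congr rfl (fun j _ => by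
      simp only [Pi.sub_apply]; ring))
  rw [hR1, hR2, hR3]
  rw [show h^2 * (∑ i : ZMod M, ∑ j : ZMod M,
      ((1/2) * (opA M h a i j)^2 + (1/4) * (a i j)^4 - (g/3) * (a i j)^3 - (ε/2) * (a i j)^2))
    - h^2 * (∑ i : ZMod M, ∑ j : ZMod M,
      ((1/2) * (opA M h b i j)^2 + (1/4) * (b i j)^4 - (g/3) * (b i j)^3 - (ε/2) * (b i j)^2))
    = h^2 * ((∑ i : ZMod M, ∑ j : ZMod M,
      ((1/2) * (opA M h a i j)^2 + (1/4) * (a i j)^4 - (g/3) * (a i j)^3 - (ε/2) * (a i j)^2))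
      - (∑ i : ZMod M, ∑ j : ZMod M,
      ((1/2) * (opA M h b i j)^2 + (1/4) * (b i j)^4 - (g/3) * (b i j)^3 - (ε/2) * (b i j)^2))) by ring]
  rw [sum2_sub]
  rw [show h^2 * (∑ i : ZMod M, ∑ j : ZMod M, opA M h a i j * (opA M h a i j - opA M h b i j))
      + h^2 * (∑ i : ZMod M, ∑ j : ZMod M,
          ((a i j)^3 - g*(a i j)^2 - ε*(a i j)) * (a i j - b i j))
      + h^2 * (∑ i : ZMod M, ∑ j : ZMod M, ((4*g^2+3*ε)/6) * (a i j - b i j)^2)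
    = h^2 * ((∑ i : ZMod M, ∑ j : ZMod M, opA M h a i j * (opA M h a i j - opA M h b i j))
      + (∑ i : ZMod M, ∑ j : ZMod M, ((a i j)^3 - g*(a i j)^2 - ε*(a i j)) * (a i j - b i j))
      + (∑ i : ZMod M, ∑ j : ZMod M, ((4*g^2+3*ε)/6) * (a i j - b i j)^2)) by ring]
  rw [sum2_add, sum2_add]
  apply mul_le_mul_of_nonneg_left _ (by positivity : (0:ℝ) ≤ h^2)
  apply Finset.sum_le_sum
  intro i _
  apply Finset.sum_le_sum
  intro j _
  have := pt_ineq g ε (a i j) (b i j) (opA M h a i j) (opA M h b i j)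
  linarith

lemma comm3 (s : Finset ℕ) (G : ℕ → ZMod M → ZMod M → ℝ) :
    ∑ m ∈ s, ∑ i : ZMod M, ∑ j : ZMod M, G m i j
      = ∑ i : ZMod M, ∑ j : ZMod M, ∑ m ∈ s, G m i j := by
  rw [Finset.sum_comm]
  exact Finset.sum_congr rfl (fun i _ => Finset.sum_comm)

lemma sum2_scal' (c : ℝ) (F : ZMod M → ZMod M → ℝ) :
    c * (∑ i : ZMod M, ∑ j : ZMod M, F i j) = ∑ i : ZMod M, ∑ j : ZMod M, c * F i j := by
  rw [Finset.mul_sum]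
  exact Finset.sum_congr rfl (fun i _ => by rw [Finset.mul_sum])

lemma dInner_comb (h : ℝ) (s : Finset ℕ) (coef : ℕ → ℝ) (f g : ℕ → ZMod M → ZMod M → ℝ) :
    ∑ m ∈ s, coef m * dInner M h (f m) (g m)
      = h^2 * ∑ i : ZMod M, ∑ j : ZMod M, ∑ m ∈ s, coef m * (f m i j * g m i j) := by
  have e1 : ∀ m ∈ s, coef m * dInner M h (f m) (g m)
      = h^2 * ∑ i : ZMod M, ∑ j : ZMod M, coef m * (f m i j * g m i j) := by
    intro m _
    unfold dInner
    rw [show coef m * (h^2 * ∑ i : ZMod M, ∑ j : ZMod M, f m i j * g m i j)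
        = h^2 * (coef m * ∑ i : ZMod M, ∑ j : ZMod M, f m i j * g m i j) by ring]
    rw [sum2_scal' (coef m) (fun i j => f m i j * g m i j)]
  rw [Finset.sum_congr rfl e1, ← Finset.mul_sum, comm3]

lemma dInner_sum_left (h : ℝ) (s : Finset ℕ) (f : ℕ → ZMod M → ZMod M → ℝ)
    (w : ZMod M → ZMod M → ℝ) :
    dInner M h (∑ k ∈ s, f k) w = ∑ k ∈ s, dInner M h (f k) w := by
  unfold dInner
  have e1 : ∀ i j : ZMod M, (∑ k ∈ s, f k) i j * w i j = ∑ k ∈ s, f k i j * w i j := by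
    intro i j
    rw [Finset.sum_apply, Finset.sum_apply, Finset.sum_mul]
  simp only [e1]
  rw [← comm3 s (fun k i j => f k i j * w i j), Finset.mul_sum]

lemma dInner_smul_left (h c : ℝ) (v w : ZMod M → ZMod M → ℝ) :
    dInner M h (c • v) w = c * dInner M h v w := by
  unfold dInner
  rw [show c * (h^2 * ∑ i : ZMod M, ∑ j : ZMod M, v i j * w i j)
      = h^2 * (c * ∑ i : ZMod M, ∑ j : ZMod M, v i j * w i j) by ring]
  rw [sum2_scal' c (fun i j => v i j * w i j)]
  congr 1
  exact Finset.sum_congr rfl (fun i _ => Finset.sum_congr rfl (fun j _ => by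
    simp only [Pi.smul_apply, smul_eq_mul]; ring))

lemma dInner_neg_left (h : ℝ) (v w : ZMod M → ZMod M → ℝ) :
    dInner M h (-v) w = -dInner M h v w := by
  unfold dInner
  rw [← mul_neg, ← Finset.sum_neg_distrib]
  congr 1
  apply Finset.sum_congr rfl
  intro i _
  rw [← Finset.sum_neg_distrib]
  exact Finset.sum_congr rfl (fun j _ => by simp only [Pi.neg_apply]; ring)

lemma telescope (f : ℕ → ℝ) : ∀ n, ∑ m ∈ Finset.Icc 1 n, (f m - f (m-1)) = f n - f 0 := by
  intro n
  induction n with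
  | zero => simp
  | succ n ih =>
    rw [Finset.sum_Icc_succ_top (by omega), ih]
    have : (n+1) - 1 = n := by omega
    rw [this]
    ring


end SHEnergyAux

open SHEnergyAux

/-- under the step restriction `τ^α ≤ 3/(Γ(2-α)(4g²+3ε))`, solutions of the
variable-step L1 scheme satisfy `E[uⁿ] ≤ E[u⁰]` for all `1 ≤ n ≤ N`. -/
theorem discrete_energy_bounded_by_initial
    (L : ℝ) (hL : 0 < L) (M : ℕ) [NeZero M] (hM : 2 ≤ M)
    (g ε : ℝ) (hg : 0 ≤ g) (hε : 0 < ε)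
    (N : ℕ) (α T : ℝ) (hα : 0 < α ∧ α < 1)
    (t : ℕ → ℝ) (ht0 : t 0 = 0) (htN : t N = T)
    (htmono : ∀ k, k < N → t k < t (k + 1))
    (hτ : ∀ k, 1 ≤ k → k ≤ N →
      (t k - t (k - 1)) ^ α ≤ 3 / (Real.Gamma (2 - α) * (4 * g ^ 2 + 3 * ε)))
    (u : ℕ → ZMod M → ZMod M → ℝ)
    (hscheme : ∀ n, 1 ≤ n → n ≤ N →
      (∑ k ∈ Finset.Icc 1 n, aK α t n k • (u k - u (k - 1)))
        = -(muSH M (L / M) g ε (u n))) :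
    ∀ n, 1 ≤ n → n ≤ N →
      dEnergy M (L / M) g ε (u n) ≤ dEnergy M (L / M) g ε (u 0) := by
  obtain ⟨hα1, hα2⟩ := hα
  intro n hn1 hnN
  set H : ℝ := L / M with hH
  set v : ℕ → ZMod M → ZMod M → ℝ := fun m => u m - u (m-1) with hv
  have hmono' : ∀ k, k < n → t k < t (k+1) := fun k hk => htmono k (by omega)
  -- diagonal kernel lower bound
  have hdiag : ∀ m, 1 ≤ m → m ≤ n → (4*g^2+3*ε)/3 ≤ aK α t m m := by
    intro m hm1 hmn
    have hlt : t (m-1) < t m := by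
      have := htmono (m-1) (by omega)
      rwa [Nat.sub_add_cancel hm1] at this
    rw [aK_diag α hα1 hα2 t m hlt]
    set τ := t m - t (m-1) with hτdef
    have hτpos : 0 < τ := by linarith
    have hταpos : 0 < τ ^ α := Real.rpow_pos_of_pos hτpos α
    have hG : 0 < Real.Gamma (2-α) := Real.Gamma_pos_of_pos (by linarith)
    have hP : 0 < 4*g^2+3*ε := by positivity
    have hb := hτ m hm1 (by omega)
    have hb2 : τ ^ α * (Real.Gamma (2-α) * (4*g^2+3*ε)) ≤ 3 := by
      rwa [← le_div_iff₀ (by positivity)]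
    rw [Real.rpow_neg hτpos.le α, div_le_div_iff₀ (by norm_num) hG]
    have hinv : τ ^ α * (τ ^ α)⁻¹ = 1 := mul_inv_cancel₀ hταpos.ne'
    nlinarith [inv_pos.2 hταpos]
  -- per-step estimate
  have step : ∀ m, 1 ≤ m → m ≤ n →
      dEnergy M H g ε (u m) - dEnergy M H g ε (u (m-1))
        ≤ -(∑ k ∈ Finset.Icc 1 m, aK α t m k * dInner M H (v k) (v m))
          + ((4*g^2+3*ε)/6) * dInner M H (v m) (v m) := by
    intro m hm1 hmn
    have h1 := energy_step (M := M) H g ε (u m) (u (m-1))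
    have h2 := hscheme m hm1 (by omega)
    have h3 : muSH M H g ε (u m)
        = -(∑ k ∈ Finset.Icc 1 m, aK α t m k • (u k - u (k-1))) := by
      rw [h2, neg_neg]
    have h4 : dInner M H (muSH M H g ε (u m)) (v m)
        = -(∑ k ∈ Finset.Icc 1 m, aK α t m k * dInner M H (v k) (v m)) := by
      rw [h3, dInner_neg_left, dInner_sum_left]
      congr 1
      exact Finset.sum_congr rfl (fun k _ => dInner_smul_left H (aK α t m k) _ _)
    have h5 : (u m - u (m-1)) = v m := rfl
    rw [h5] at h1
    linarith
  -- telescoping + summation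
  have tele := telescope (fun m => dEnergy M H g ε (u m)) n
  have sum_step : ∑ m ∈ Finset.Icc 1 n,
        (dEnergy M H g ε (u m) - dEnergy M H g ε (u (m-1)))
      ≤ ∑ m ∈ Finset.Icc 1 n,
          (-(∑ k ∈ Finset.Icc 1 m, aK α t m k * dInner M H (v k) (v m))
            + ((4*g^2+3*ε)/6) * dInner M H (v m) (v m)) := by
    apply Finset.sum_le_sum
    intro m hm
    simp only [Finset.mem_Icc] at hm
    exact step m hm.1 hm.2
  -- positive definiteness at grid level
  have psd : (1/2) * ∑ m ∈ Finset.Icc 1 n, aK α t m m * dInner M H (v m) (v m)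
      ≤ ∑ m ∈ Finset.Icc 1 n, ∑ k ∈ Finset.Icc 1 m, aK α t m k * dInner M H (v k) (v m) := by
    have hpt : ∀ i j : ZMod M,
        (1/2) * ∑ m ∈ Finset.Icc 1 n, aK α t m m * (v m i j) ^ 2
          ≤ ∑ m ∈ Finset.Icc 1 n, ∑ k ∈ Finset.Icc 1 m, aK α t m k * (v k i j * v m i j) :=
      fun i j => scalar_psd α hα1 hα2 t n hmono' (fun m => v m i j)
    have hL2 : (1/2) * ∑ m ∈ Finset.Icc 1 n, aK α t m m * dInner M H (v m) (v m)
        = H^2 * ∑ i : ZMod M, ∑ j : ZMod M,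
            ((1/2) * ∑ m ∈ Finset.Icc 1 n, aK α t m m * (v m i j) ^ 2) := by
      rw [dInner_comb H (Finset.Icc 1 n) (fun m => aK α t m m) v v]
      rw [show (1/2 : ℝ) * (H^2 * ∑ i : ZMod M, ∑ j : ZMod M, ∑ m ∈ Finset.Icc 1 n,
            aK α t m m * (v m i j * v m i j))
          = H^2 * ((1/2) * ∑ i : ZMod M, ∑ j : ZMod M, ∑ m ∈ Finset.Icc 1 n,
            aK α t m m * (v m i j * v m i j)) by ring]
      rw [sum2_scal' ((1:ℝ)/2) (fun i j => ∑ m ∈ Finset.Icc 1 n,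
        aK α t m m * (v m i j * v m i j))]
      congr 1
      apply Finset.sum_congr rfl; intro i _
      apply Finset.sum_congr rfl; intro j _
      congr 1
      exact Finset.sum_congr rfl (fun m _ => by ring)
    have hR2 : ∑ m ∈ Finset.Icc 1 n, ∑ k ∈ Finset.Icc 1 m, aK α t m k * dInner M H (v k) (v m)
        = H^2 * ∑ i : ZMod M, ∑ j : ZMod M,
            (∑ m ∈ Finset.Icc 1 n, ∑ k ∈ Finset.Icc 1 m, aK α t m k * (v k i j * v m i j)) := by
      have e1 : ∀ m ∈ Finset.Icc 1 n,
          ∑ k ∈ Finset.Icc 1 m, aK α t m k * dInner M H (v k) (v m)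
            = H^2 * ∑ i : ZMod M, ∑ j : ZMod M,
                ∑ k ∈ Finset.Icc 1 m, aK α t m k * (v k i j * v m i j) := by
        intro m _
        exact dInner_comb H (Finset.Icc 1 m) (fun k => aK α t m k) v (fun _ => v m)
      rw [Finset.sum_congr rfl e1, ← Finset.mul_sum,
        comm3 (Finset.Icc 1 n) (fun m i j => ∑ k ∈ Finset.Icc 1 m, aK α t m k * (v k i j * v m i j))]
    rw [hL2, hR2]
    apply mul_le_mul_of_nonneg_left _ (by positivity : (0:ℝ) ≤ H^2)
    apply Finset.sum_le_sum
    intro i _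
    apply Finset.sum_le_sum
    intro j _
    exact hpt i j
  -- conclude
  have final : ∑ m ∈ Finset.Icc 1 n,
      (-(∑ k ∈ Finset.Icc 1 m, aK α t m k * dInner M H (v k) (v m))
        + ((4*g^2+3*ε)/6) * dInner M H (v m) (v m)) ≤ 0 := by
    rw [Finset.sum_add_distrib, Finset.sum_neg_distrib]
    have hbound : ∑ m ∈ Finset.Icc 1 n, ((4*g^2+3*ε)/6) * dInner M H (v m) (v m)
        ≤ (1/2) * ∑ m ∈ Finset.Icc 1 n, aK α t m m * dInner M H (v m) (v m) := by
      rw [Finset.mul_sum]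
      apply Finset.sum_le_sum
      intro m hm
      simp only [Finset.mem_Icc] at hm
      have h1 := hdiag m hm.1 hm.2
      have h2 := dInner_nonneg H (v m)
      nlinarith
    linarith
  have := le_trans sum_step final
  rw [tele] at this
  linarith
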